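/- Let P = {x₁,…,x_n} be a point set in [0,1)^d, and for nonempty u ⊆ {1,…,d} let K_u(x_u, t_u) = ∏_{i∈u} K(x_i,t_i) with K(x,t) = t if x ≥ t and K(x,t) = t−1 if x < t. Then for every nonempty u ⊆ {1,…,d} and every t ∈ [0,1]^d: ∑_{j=1}^n K_u(x_{j,u}, t_u) = n · ∑_{k=1}^{|u|} (−1)^k ∑_{v ⊆ u, |v|=k} Δ_{P_v}(t_v) · ∏_{i ∈ u∖v} t_i, where Δ_{P_v}(t_v) = (1/n)∑_{j=1}^n ∏_{i∈v} 1_{[0,t_i)}(x_{j,i}) − ∏_{i∈v} t_i is the local discrepancy of the projection of P onto coordinates in v. -/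

import Mathlib

theorem kernel_sum_discrepancy_formula (d n : ℕ) (hn : 0 < n)
    (x : Fin n → Fin d → ℝ) (hx : ∀ j i, x j i ∈ Set.Ico (0 : ℝ) 1)
    (t : Fin d → ℝ) (ht : ∀ i, t i ∈ Set.Icc (0 : ℝ) 1)
    (u : Finset (Fin d)) (hu : u.Nonempty) :
    ∑ j, ∏ i ∈ u, (if t i ≤ x j i then t i else t i - 1)
      = n * ∑ k ∈ Finset.Icc 1 u.card, (-1 : ℝ) ^ k *
          ∑ v ∈ u.powerset.filter (fun v => v.card = k),
            ((1 / (n : ℝ)) * ∑ j, ∏ i ∈ v, (if x j i < t i then (1:ℝ) else 0)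
                - ∏ i ∈ v, t i) * ∏ i ∈ u \ v, t i := by
  classical
  have hn' : (n : ℝ) ≠ 0 := Nat.cast_ne_zero.mpr hn.ne'
  set χ : Fin n → Fin d → ℝ := fun j i => if x j i < t i then (1:ℝ) else 0 with hχ
  set A : Finset (Fin d) → ℝ := fun v => ∑ j, ∏ i ∈ v, χ j i with hA
  set G : Finset (Fin d) → ℝ := fun v =>
    (-1 : ℝ) ^ v.card * (((1 / (n : ℝ)) * A v - ∏ i ∈ v, t i) * ∏ i ∈ u \ v, t i) with hG
  -- LHS expansion
  have hLHS : ∑ j, ∏ i ∈ u, (if t i ≤ x j i then t i else t i - 1)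
      = ∑ v ∈ u.powerset, (-1 : ℝ) ^ v.card * A v * ∏ i ∈ u \ v, t i := by
    have key : ∀ j, ∏ i ∈ u, (if t i ≤ x j i then t i else t i - 1)
        = ∑ v ∈ u.powerset, (-1 : ℝ) ^ v.card * (∏ i ∈ v, χ j i) * ∏ i ∈ u \ v, t i := by
      intro j
      have h1 : ∀ i ∈ u, (if t i ≤ x j i then t i else t i - 1) = (-(χ j i)) + t i := by
        intro i _
        by_cases h : t i ≤ x j i
        · simp [hχ, h, not_lt.2 h]
        · simp [hχ, h, lt_of_not_ge h]
          ring
      rw [Finset.prod_congr rfl h1, Finset.prod_add]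
      refine Finset.sum_congr rfl fun v hv => ?_
      have : ∏ i ∈ v, (-(χ j i)) = (-1 : ℝ) ^ v.card * ∏ i ∈ v, χ j i := by
        rw [← Finset.prod_const, ← Finset.prod_mul_distrib]
        exact Finset.prod_congr rfl fun i _ => (neg_one_mul _).symm
      rw [this]
    rw [Finset.sum_congr rfl fun j _ => key j, Finset.sum_comm]
    refine Finset.sum_congr rfl fun v hv => ?_
    simp only [hA, Finset.mul_sum, Finset.sum_mul]
  -- RHS rewrite
  have hfilter : ∀ k, u.powerset.filter (fun v => v.card = k) = Finset.powersetCard k u :=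
    fun k => Finset.powersetCard_eq_filter.symm
  have hRHS : (n : ℝ) * ∑ k ∈ Finset.Icc 1 u.card, (-1 : ℝ) ^ k *
          ∑ v ∈ u.powerset.filter (fun v => v.card = k),
            ((1 / (n : ℝ)) * ∑ j, ∏ i ∈ v, (if x j i < t i then (1:ℝ) else 0)
                - ∏ i ∈ v, t i) * ∏ i ∈ u \ v, t i
      = (n : ℝ) * ∑ v ∈ u.powerset, G v := by
    congr 1
    have step1 : ∀ k, (-1 : ℝ) ^ k *
          ∑ v ∈ u.powerset.filter (fun v => v.card = k),
            ((1 / (n : ℝ)) * ∑ j, ∏ i ∈ v, (if x j i < t i then (1:ℝ) else 0)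
                - ∏ i ∈ v, t i) * ∏ i ∈ u \ v, t i
        = ∑ v ∈ Finset.powersetCard k u, G v := by
      intro k
      rw [hfilter, Finset.mul_sum]
      refine Finset.sum_congr rfl fun v hv => ?_
      have hc : v.card = k := (Finset.mem_powersetCard.1 hv).2
      simp [hG, hA, hχ, hc]
    rw [Finset.sum_congr rfl fun k _ => step1 k]
    -- extend sum over Icc 1 m to range (m+1) using G ∅ = 0
    have hG0 : G ∅ = 0 := by
      have hA0 : A ∅ = (n : ℝ) := by simp [hA]
      simp [hG, hA0, hn']
    have hrange : Finset.range (u.card + 1) = insert 0 (Finset.Icc 1 u.card) := by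
      ext k; simp; omega
    rw [Finset.sum_powerset, hrange, Finset.sum_insert (by simp)]
    simp [hG0]
  rw [hLHS, hRHS, Finset.mul_sum]
  have hterm : ∀ v ∈ u.powerset, (n : ℝ) * G v
      = (-1 : ℝ) ^ v.card * A v * ∏ i ∈ u \ v, t i
        - (-1 : ℝ) ^ v.card * ((n : ℝ) * ∏ i ∈ u, t i) := by
    intro v hv
    have hsub : v ⊆ u := Finset.mem_powerset.1 hv
    have hprod : (∏ i ∈ v, t i) * ∏ i ∈ u \ v, t i = ∏ i ∈ u, t i := by
      rw [mul_comm, Finset.prod_sdiff hsub]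
    rw [hG, ← hprod]
    field_simp
  rw [Finset.sum_congr rfl hterm, Finset.sum_sub_distrib]
  have hzero : ∑ v ∈ u.powerset, (-1 : ℝ) ^ v.card * ((n : ℝ) * ∏ i ∈ u, t i) = 0 := by
    rw [← Finset.sum_mul]
    have hzsum : ∑ v ∈ u.powerset, (-1 : ℝ) ^ v.card = 0 := by
      have h := Finset.sum_powerset_neg_one_pow_card_of_nonempty hu
      calc ∑ v ∈ u.powerset, (-1 : ℝ) ^ v.card
          = ((∑ v ∈ u.powerset, (-1 : ℤ) ^ v.card : ℤ) : ℝ) := by push_cast; rfl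
        _ = 0 := by rw [h]; simp
    rw [hzsum, zero_mul]
  rw [hzero, sub_zero]
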